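/- Let b^{(j)}_{j-k} be convolution kernels satisfying the positive-definiteness property ∑_{k=1}^n w_k ∑_{j=1}^k b^{(k)}_{k-j} w_j ≥ 0 for all real sequences (w_k) and all n, and let θ^{(n)}_{n-j} be the associated DOC kernels. Then ∑_{k=1}^n w_k ∑_{j=1}^k θ^{(k)}_{k-j} w_j ≥ 0 for all real sequences (w_k)_{k=1}^n and all n ≥ 1. -/

import Mathlib

open Finset

/-- Solve the lower-triangular system `∑_{j=1}^k b k j * u j = w k` by
forward substitution. -/
private noncomputable def docSolve (b : ℕ → ℕ → ℝ) (w : ℕ → ℝ) : ℕ → ℝ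
  | k => (w k - ∑ j ∈ (range k).attach,
      (if 1 ≤ (j : ℕ) then b k j * docSolve b w j else 0)) / b k k
decreasing_by exact mem_range.mp j.2

private lemma docSolve_spec (b : ℕ → ℕ → ℝ) (w : ℕ → ℝ) (k : ℕ)
    (hk : 1 ≤ k) (hbk : b k k ≠ 0) :
    ∑ j ∈ Icc 1 k, b k j * docSolve b w j = w k := by
  have hattach : ∑ j ∈ (range k).attach,
      (if 1 ≤ (j : ℕ) then b k j * docSolve b w j else 0)
      = ∑ j ∈ Icc 1 (k - 1), b k j * docSolve b w j := by
    rw [Finset.sum_attach (range k)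
      (fun j => if 1 ≤ j then b k j * docSolve b w j else 0), ← Finset.sum_filter]
    congr 1
    ext j
    simp only [mem_filter, mem_range, mem_Icc]
    omega
  have hu : docSolve b w k
      = (w k - ∑ j ∈ Icc 1 (k - 1), b k j * docSolve b w j) / b k k := by
    rw [docSolve, hattach]
  have hsplit : Icc 1 k = insert k (Icc 1 (k - 1)) := by
    ext j; simp only [mem_insert, mem_Icc]; omega
  rw [hsplit, Finset.sum_insert (by simp only [mem_Icc, not_and, not_le]; omega), hu]
  field_simp
  ring

theorem doc_positive_definite (N : ℕ) (b θ : ℕ → ℕ → ℝ)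
    (hb0 : ∀ j, 1 ≤ j → j ≤ N → b j j ≠ 0)
    (hdoc : ∀ k n, 1 ≤ k → k ≤ n → n ≤ N →
      ∑ j ∈ Icc k n, θ n j * b j k = if n = k then 1 else 0)
    (hbpos : ∀ n, n ≤ N → ∀ w : ℕ → ℝ,
      0 ≤ ∑ k ∈ Icc 1 n, w k * ∑ j ∈ Icc 1 k, b k j * w j) :
    ∀ n, 1 ≤ n → n ≤ N → ∀ w : ℕ → ℝ,
      0 ≤ ∑ k ∈ Icc 1 n, w k * ∑ j ∈ Icc 1 k, θ k j * w j := by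
  intro n hn hN w
  set u : ℕ → ℝ := docSolve b w with hu
  have hspec : ∀ k, 1 ≤ k → k ≤ N → ∑ j ∈ Icc 1 k, b k j * u j = w k := by
    intro k hk hkN
    exact docSolve_spec b w k hk (hb0 k hk hkN)
  -- key identity: the θ-transform of w is u
  have hkey : ∀ k, 1 ≤ k → k ≤ n → ∑ j ∈ Icc 1 k, θ k j * w j = u k := by
    intro k hk hkn
    calc ∑ j ∈ Icc 1 k, θ k j * w j
        = ∑ j ∈ Icc 1 k, ∑ i ∈ Icc 1 j, θ k j * b j i * u i := by
          refine Finset.sum_congr rfl fun j hj => ?_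
          simp only [mem_Icc] at hj
          rw [← hspec j hj.1 (by omega), Finset.mul_sum]
          exact Finset.sum_congr rfl fun i _ => by ring
      _ = ∑ i ∈ Icc 1 k, ∑ j ∈ Icc i k, θ k j * b j i * u i := by
          refine Finset.sum_comm' fun j i => ?_
          simp only [mem_Icc]
          omega
      _ = ∑ i ∈ Icc 1 k, (∑ j ∈ Icc i k, θ k j * b j i) * u i := by
          refine Finset.sum_congr rfl fun i _ => ?_
          rw [Finset.sum_mul]
      _ = ∑ i ∈ Icc 1 k, (if k = i then 1 else 0) * u i := by
          refine Finset.sum_congr rfl fun i hi => ?_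
          simp only [mem_Icc] at hi
          rw [hdoc i k hi.1 hi.2 (by omega)]
      _ = u k := by
          simp only [ite_mul, one_mul, zero_mul]
          rw [Finset.sum_ite_eq]
          simp only [mem_Icc, if_pos]
          simp [hk]
  have h1 : ∑ k ∈ Icc 1 n, w k * ∑ j ∈ Icc 1 k, θ k j * w j
      = ∑ k ∈ Icc 1 n, u k * ∑ j ∈ Icc 1 k, b k j * u j := by
    refine Finset.sum_congr rfl fun k hk => ?_
    simp only [mem_Icc] at hk
    rw [hkey k hk.1 hk.2, ← hspec k hk.1 (by omega), mul_comm]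
  rw [h1]
  exact hbpos n hN u
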